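/- For all real numbers M > 0, D > 0 and λ > 0, the supremum over ω ∈ ℝ of |ω| / √((λ − Mω²)² + D²ω²) equals 1/D, and it is attained at ω = ±√(λ/M). (This is the H∞ norm of the frequency-output mode G̃(s) = s/(Ms² + Ds + λ).) -/

import Mathlib

/-- The H∞ norm of the frequency-output mode `G̃(s) = s/(Ms² + Ds + λ)`:
`sup_{ω ∈ ℝ} |ω|/√((λ − Mω²)² + D²ω²) = 1/D`, and the supremum is attained at
`ω = ±√(λ/M)`. -/
theorem frequency_mode_Hinf_norm (M D lam : ℝ) (hM : 0 < M) (hD : 0 < D)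
    (hlam : 0 < lam) :
    (⨆ ω : ℝ, |ω| / Real.sqrt ((lam - M * ω ^ 2) ^ 2 + D ^ 2 * ω ^ 2)) = 1 / D ∧
    |Real.sqrt (lam / M)| /
        Real.sqrt ((lam - M * (Real.sqrt (lam / M)) ^ 2) ^ 2 +
          D ^ 2 * (Real.sqrt (lam / M)) ^ 2) = 1 / D ∧
    |-Real.sqrt (lam / M)| /
        Real.sqrt ((lam - M * (-Real.sqrt (lam / M)) ^ 2) ^ 2 +
          D ^ 2 * (-Real.sqrt (lam / M)) ^ 2) = 1 / D := by
  set ω₀ := Real.sqrt (lam / M) with hω₀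
  have hdivpos : 0 < lam / M := div_pos hlam hM
  have hω₀pos : 0 < ω₀ := Real.sqrt_pos.mpr hdivpos
  have hsq : ω₀ ^ 2 = lam / M := Real.sq_sqrt hdivpos.le
  have hzero : lam - M * ω₀ ^ 2 = 0 := by
    rw [hsq]; field_simp; ring
  have hval : |ω₀| / Real.sqrt ((lam - M * ω₀ ^ 2) ^ 2 + D ^ 2 * ω₀ ^ 2) = 1 / D := by
    rw [hzero]
    have : Real.sqrt (0 ^ 2 + D ^ 2 * ω₀ ^ 2) = D * ω₀ := by
      rw [show (0:ℝ) ^ 2 + D ^ 2 * ω₀ ^ 2 = (D * ω₀) ^ 2 by ring]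
      exact Real.sqrt_sq (by positivity)
    rw [this, abs_of_pos hω₀pos]
    field_simp
  have hle : ∀ ω : ℝ, |ω| / Real.sqrt ((lam - M * ω ^ 2) ^ 2 + D ^ 2 * ω ^ 2) ≤ 1 / D := by
    intro ω
    rcases eq_or_ne ω 0 with h | h
    · simp [h]; positivity
    · have h1 : D * |ω| ≤ Real.sqrt ((lam - M * ω ^ 2) ^ 2 + D ^ 2 * ω ^ 2) := by
        rw [show D * |ω| = Real.sqrt ((D * |ω|) ^ 2) from
          (Real.sqrt_sq (by positivity)).symm]
        apply Real.sqrt_le_sqrt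
        have : (D * |ω|) ^ 2 = D ^ 2 * ω ^ 2 := by
          rw [mul_pow, sq_abs]
        nlinarith [sq_nonneg (lam - M * ω ^ 2)]
      have hωpos : 0 < |ω| := abs_pos.mpr h
      have hdpos : 0 < D * |ω| := by positivity
      calc |ω| / Real.sqrt ((lam - M * ω ^ 2) ^ 2 + D ^ 2 * ω ^ 2)
          ≤ |ω| / (D * |ω|) := by
            apply div_le_div_of_nonneg_left hωpos.le hdpos h1
        _ = 1 / D := by field_simp
  refine ⟨?_, hval, ?_⟩
  · apply le_antisymm
    · exact ciSup_le hle
    · calc (1:ℝ)/D = |ω₀| / Real.sqrt ((lam - M * ω₀ ^ 2) ^ 2 + D ^ 2 * ω₀ ^ 2) := hval.symm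
        _ ≤ _ := le_ciSup ⟨1/D, Set.forall_mem_range.mpr hle⟩ ω₀
  · simpa using hval
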